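/- Let X and Z be the 2×2 Pauli matrices and let H ∈ u(2^n) be any element of the real Lie algebra generated by i·Σ_{u∈V} X_u and i·Σ_{(u,v)∈E} Z_u Z_v for a simple graph G = (V, E). Then for every graph automorphism π ∈ Aut(G), the qubit-permutation action of π fixes H; that is, permuting the tensor factors of H according to π returns H. Consequently, if for every vertex u the single operator i X_u lies in the DLA, then Aut(G) is trivial. -/

import Mathlib

/-- The Pauli `X` operator acting on qubit `u` (tensored with identity elsewhere),
as a matrix on the computational basis `V → Bool`. -/
noncomputable def PX {V : Type*} [Fintype V] [DecidableEq V] (u : V) :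
    Matrix (V → Bool) (V → Bool) ℂ :=
  fun s t => if s = Function.update t u (!(t u)) then 1 else 0

/-- The Pauli `Z` operator acting on qubit `u`. -/
noncomputable def PZ {V : Type*} [Fintype V] [DecidableEq V] (u : V) :
    Matrix (V → Bool) (V → Bool) ℂ :=
  Matrix.diagonal fun s => if s u then -1 else 1

/-- The operator `Z_u Z_v` associated with an unordered pair `{u, v}`. -/
noncomputable def PZZ {V : Type*} [Fintype V] [DecidableEq V] (e : Sym2 V) :
    Matrix (V → Bool) (V → Bool) ℂ :=
  Sym2.lift ⟨fun a b => PZ a * PZ b, fun a b => by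
    show PZ a * PZ b = PZ b * PZ a
    unfold PZ
    rw [Matrix.diagonal_mul_diagonal, Matrix.diagonal_mul_diagonal,
      show (fun i : V → Bool => (if i a = true then (-1 : ℂ) else 1) *
          if i b = true then -1 else 1) =
        (fun i : V → Bool => (if i b = true then (-1 : ℂ) else 1) *
          if i a = true then -1 else 1) from funext fun i => mul_comm _ _]⟩ e

attribute [local instance 100] LieRing.ofAssociativeRing

/-- The QAOA-MaxCut dynamical Lie algebra of an unweighted graph `G`: the real Lie
algebra generated by `i·H_m` and `i·H_p`. -/
noncomputable def dla {V : Type*} [Fintype V] [DecidableEq V] (G : SimpleGraph V)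
    [DecidableRel G.Adj] : LieSubalgebra ℝ (Matrix (V → Bool) (V → Bool) ℂ) :=
  LieSubalgebra.lieSpan ℝ _
    {Complex.I • ∑ u : V, PX u, Complex.I • ∑ e ∈ G.edgeFinset, PZZ e}

/-- The action of a permutation `π` of the qubits on a matrix: permute the tensor
factors, i.e. reindex both computational-basis indices by precomposition with `π`
(this sends the Pauli string `P_1 ⊗ ⋯ ⊗ P_n` to `P_{π(1)} ⊗ ⋯ ⊗ P_{π(n)}`). -/
noncomputable def qubitPerm {V : Type*} [Fintype V] [DecidableEq V] (π : Equiv.Perm V)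
    (M : Matrix (V → Bool) (V → Bool) ℂ) : Matrix (V → Bool) (V → Bool) ℂ :=
  M.submatrix (fun s => s ∘ π) (fun t => t ∘ π)


section Aux
variable {V : Type*} [Fintype V] [DecidableEq V]

lemma comp_inj (π : Equiv.Perm V) {s w : V → Bool} :
    s ∘ π = w ∘ π ↔ s = w := by
  constructor
  · intro h; funext x
    have := congrFun h (π.symm x)
    simpa using this
  · rintro rfl; rfl

lemma qP_mul (π : Equiv.Perm V) (A B : Matrix (V → Bool) (V → Bool) ℂ) :
    qubitPerm π (A * B) = qubitPerm π A * qubitPerm π B := by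
  unfold qubitPerm
  have := Matrix.submatrix_mul_equiv A B (fun s : V → Bool => s ∘ π)
    (Equiv.arrowCongr π.symm (Equiv.refl Bool)) (fun t : V → Bool => t ∘ π)
  have hco : ⇑(Equiv.arrowCongr π.symm (Equiv.refl Bool)) = fun s : V → Bool => s ∘ π := by
    funext s; funext x; simp [Equiv.arrowCongr, Function.comp]
  rw [hco] at this
  exact this.symm

lemma qP_PX (π : Equiv.Perm V) (u : V) : qubitPerm π (PX u) = PX (π u) := by
  ext s t
  unfold qubitPerm PX
  show (if s ∘ ⇑π = Function.update (t ∘ ⇑π) u (!((t ∘ ⇑π) u)) then (1:ℂ) else 0)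
    = if s = Function.update t (π u) (!(t (π u))) then 1 else 0
  have hc : (Function.update t (π u) (!(t (π u)))) ∘ ⇑π
      = Function.update (t ∘ ⇑π) u (!((t ∘ ⇑π) u)) := by
    funext x
    simp [Function.comp, Function.update_apply, π.injective.eq_iff]
  rw [show (!( (t ∘ ⇑π) u)) = (!(t (π u))) from rfl] at *
  rw [← hc]
  simp only [comp_inj π]

lemma qP_PZ (π : Equiv.Perm V) (u : V) : qubitPerm π (PZ u) = PZ (π u) := by
  ext s t
  unfold qubitPerm PZ
  simp only [Matrix.submatrix_apply, Matrix.diagonal_apply]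
  simp only [comp_inj π]
  rfl

lemma qP_PZZ (π : Equiv.Perm V) (e : Sym2 V) :
    qubitPerm π (PZZ e) = PZZ (e.map π) := by
  induction e using Sym2.ind with
  | _ a b =>
    rw [Sym2.map_pair_eq]
    show qubitPerm π (PZ a * PZ b) = PZ (π a) * PZ (π b)
    rw [qP_mul, qP_PZ, qP_PZ]

noncomputable def fixedAlg (π : Equiv.Perm V) :
    LieSubalgebra ℝ (Matrix (V → Bool) (V → Bool) ℂ) where
  carrier := {M | qubitPerm π M = M}
  add_mem' := by
    intro a b ha hb
    simp only [Set.mem_setOf_eq] at *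
    simp [qubitPerm, Matrix.submatrix_add] at *
    rw [ha, hb]
  zero_mem' := by simp [qubitPerm]
  smul_mem' := by
    intro c a ha
    simp only [Set.mem_setOf_eq] at *
    simp [qubitPerm, Matrix.submatrix_smul] at *
    rw [ha]
  lie_mem' := by
    intro a b ha hb
    simp only [Set.mem_setOf_eq] at *
    show qubitPerm π (a * b - b * a) = a * b - b * a
    have : qubitPerm π (a * b - b * a)
        = qubitPerm π (a * b) - qubitPerm π (b * a) := by
      simp [qubitPerm, Matrix.submatrix_sub]
    rw [this, qP_mul, qP_mul, ha, hb]

lemma qP_smul (π : Equiv.Perm V) (c : ℂ) (M : Matrix (V → Bool) (V → Bool) ℂ) :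
    qubitPerm π (c • M) = c • qubitPerm π M := by
  simp [qubitPerm, Matrix.submatrix_smul]

lemma qP_sum (π : Equiv.Perm V) {ι : Type*} (s : Finset ι)
    (f : ι → Matrix (V → Bool) (V → Bool) ℂ) :
    qubitPerm π (∑ i ∈ s, f i) = ∑ i ∈ s, qubitPerm π (f i) := by
  ext a b
  simp [qubitPerm, Matrix.sum_apply]

lemma qP_sumX (π : Equiv.Perm V) :
    qubitPerm π (∑ u : V, PX u) = ∑ u : V, PX u := by
  have h1 : qubitPerm π (∑ u : V, PX u) = ∑ u : V, PX (π u) := by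
    rw [qP_sum]
    exact Finset.sum_congr rfl fun u _ => qP_PX π u
  rw [h1]
  exact Fintype.sum_equiv π _ _ fun u => rfl

lemma qP_sumZZ (G : SimpleGraph V) [DecidableRel G.Adj] (π : Equiv.Perm V)
    (hπ : ∀ a b : V, G.Adj (π a) (π b) ↔ G.Adj a b) :
    qubitPerm π (∑ e ∈ G.edgeFinset, PZZ e) = ∑ e ∈ G.edgeFinset, PZZ e := by
  have h1 : qubitPerm π (∑ e ∈ G.edgeFinset, PZZ e)
      = ∑ e ∈ G.edgeFinset, PZZ (e.map π) := by
    rw [qP_sum]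
    exact Finset.sum_congr rfl fun e _ => qP_PZZ π e
  rw [h1]
  have hmem : ∀ e : Sym2 V, e ∈ G.edgeFinset → e.map π ∈ G.edgeFinset := by
    intro e he
    rw [SimpleGraph.mem_edgeFinset] at *
    induction e using Sym2.ind with
    | _ a b =>
      rw [Sym2.map_pair_eq, SimpleGraph.mem_edgeSet] at *
      exact (hπ a b).mpr he
  have hmem' : ∀ e : Sym2 V, e ∈ G.edgeFinset → e.map π.symm ∈ G.edgeFinset := by
    intro e he
    rw [SimpleGraph.mem_edgeFinset] at *
    induction e using Sym2.ind with
    | _ a b =>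
      rw [Sym2.map_pair_eq, SimpleGraph.mem_edgeSet] at *
      have := (hπ (π.symm a) (π.symm b)).mp
      simpa using this (by simpa using he)
  refine Finset.sum_nbij' (fun e => e.map π) (fun e => e.map π.symm)
    hmem hmem' ?_ ?_ ?_
  · intro e _
    induction e using Sym2.ind with
    | _ a b => simp [Sym2.map_pair_eq]
  · intro e _
    induction e using Sym2.ind with
    | _ a b => simp [Sym2.map_pair_eq]
  · intro e _; rfl

lemma PX_inj {u v : V} (h : PX u = PX v) : u = v := by
  by_contra hne
  have := congrFun (congrFun h (Function.update (fun _ => false) u true)) (fun _ => false)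
  simp only [PX] at this
  rw [if_pos (by funext x; simp [Function.update_apply])] at this
  rw [if_neg] at this
  · exact one_ne_zero this
  · intro hcontra
    have := congrFun hcontra u
    simp [Function.update_apply, hne, Ne.symm hne] at this

end Aux

/-- every element of the QAOA-MaxCut DLA is fixed by the
qubit-permutation action of every automorphism of `G`; consequently, if `i X_u`
lies in the DLA for every vertex `u`, then `Aut(G)` is trivial. -/
theorem stmt_19 {V : Type*} [Fintype V] [DecidableEq V] (G : SimpleGraph V)
    [DecidableRel G.Adj] :
    (∀ π : Equiv.Perm V, (∀ a b : V, G.Adj (π a) (π b) ↔ G.Adj a b) →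
      ∀ H ∈ dla G, qubitPerm π H = H) ∧
    ((∀ u : V, Complex.I • PX u ∈ dla G) →
      ∀ π : Equiv.Perm V, (∀ a b : V, G.Adj (π a) (π b) ↔ G.Adj a b) →
        π = Equiv.refl V) := by
  have main : ∀ π : Equiv.Perm V, (∀ a b : V, G.Adj (π a) (π b) ↔ G.Adj a b) →
      ∀ H ∈ dla G, qubitPerm π H = H := by
    intro π hπ H hH
    have hle : dla G ≤ fixedAlg π := by
      rw [dla, LieSubalgebra.lieSpan_le]
      intro x hx
      rcases hx with rfl | hx
      · show qubitPerm π _ = _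
        rw [qP_smul, qP_sumX]
      · rcases hx with rfl
        show qubitPerm π _ = _
        rw [qP_smul, qP_sumZZ G π hπ]
    exact hle hH
  refine ⟨main, ?_⟩
  intro hX π hπ
  have hfix : ∀ u : V, PX (π u) = PX u := by
    intro u
    have := main π hπ _ (hX u)
    rw [qP_smul, qP_PX] at this
    exact smul_right_injective _ Complex.I_ne_zero this
  ext x
  exact PX_inj (hfix x)
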